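/- arXiv:2312.13653 — 2 statements merged into one kernel-verified Lean document; each statement's English description precedes it below -/
import Mathlib

section
/- Let χ(s) = (s+1)·log(s+1) − s. Then for every s > 0, χ(s) ≤ s·log(s) + 1 − log(e−1), and equality holds at s = 1/(e−1). -/
noncomputable def chi (s : ℝ) : ℝ := (s + 1) * Real.log (s + 1) - s

lemma log_le_div_e (u : ℝ) (hu : 0 < u) : Real.log u ≤ u / Real.exp 1 := by
  have h := Real.log_le_sub_one_of_pos (x := u / Real.exp 1) (by positivity)
  rw [Real.log_div (ne_of_gt hu) (by positivity), Real.log_exp] at h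
  linarith

theorem chi_le_xlogx :
    (∀ s : ℝ, 0 < s →
      chi s ≤ s * Real.log s + 1 - Real.log (Real.exp 1 - 1)) ∧
    chi (1 / (Real.exp 1 - 1)) =
      (1 / (Real.exp 1 - 1)) * Real.log (1 / (Real.exp 1 - 1)) + 1
        - Real.log (Real.exp 1 - 1) := by
  have he : (1 : ℝ) < Real.exp 1 := by
    have h : Real.exp 0 < Real.exp 1 := Real.exp_lt_exp.2 zero_lt_one
    rwa [Real.exp_zero] at h
  have hE : 0 < Real.exp 1 - 1 := by linarith
  have hepos : 0 < Real.exp 1 := Real.exp_pos 1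
  constructor
  · intro s hs
    have hs1 : 0 < s + 1 := by linarith
    -- first tangent inequality
    have h1 : Real.log (s + 1) + Real.log (Real.exp 1 - 1)
        ≤ (s + 1) * (Real.exp 1 - 1) / Real.exp 1 := by
      have := log_le_div_e ((s + 1) * (Real.exp 1 - 1)) (by positivity)
      rwa [Real.log_mul (ne_of_gt hs1) (ne_of_gt hE)] at this
    -- second tangent inequality
    have h2 : Real.log (s + 1) - Real.log s ≤ (s + 1) / (s * Real.exp 1) := by
      have := log_le_div_e ((s + 1) / s) (by positivity)
      rwa [Real.log_div (ne_of_gt hs1) (ne_of_gt hs), div_div] at this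
    have h2' : s * (Real.log (s + 1) - Real.log s) ≤ (s + 1) / Real.exp 1 := by
      have := mul_le_mul_of_nonneg_left h2 (le_of_lt hs)
      calc s * (Real.log (s + 1) - Real.log s)
          ≤ s * ((s + 1) / (s * Real.exp 1)) := this
        _ = (s + 1) / Real.exp 1 := by field_simp
    have key : (s + 1) * (Real.exp 1 - 1) / Real.exp 1 + (s + 1) / Real.exp 1
        = s + 1 := by field_simp; ring
    unfold chi
    nlinarith [h1, h2', key]
  · have hEne : (Real.exp 1 - 1) ≠ 0 := ne_of_gt hE
    have hlog0 : Real.log (1 / (Real.exp 1 - 1)) = -Real.log (Real.exp 1 - 1) := by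
      rw [one_div, Real.log_inv]
    have hsum : 1 / (Real.exp 1 - 1) + 1 = Real.exp 1 / (Real.exp 1 - 1) := by
      field_simp
      ring
    have hlog1 : Real.log (1 / (Real.exp 1 - 1) + 1)
        = 1 - Real.log (Real.exp 1 - 1) := by
      rw [hsum, Real.log_div (ne_of_gt hepos) hEne, Real.log_exp]
    unfold chi
    rw [hlog1, hlog0]
    ring
end

section
/- Let (X, μ) be a finite measure space and let χ(s) = (s+1)·log(s+1) − s. Suppose f: X → [0,∞) is measurable and ∫_X f·log(f) dμ ≤ A for some real A (with the convention 0·log 0 = 0). Set A' := max{A + μ(X)·(1 − log(e−1)), 2}. Then ∫_X χ(f/A') dμ ≤ 1; in particular the Luxembourg norm ‖f‖_{L^χ(μ)} := inf{c > 0 : ∫_X χ(|f|/c) dμ ≤ 1} is at most A'. -/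
open MeasureTheory

/-- The Luxembourg norm with weight `chi`. -/
noncomputable def luxNorm {X : Type*} [MeasurableSpace X] (μ : Measure X)
    (f : X → ℝ) : ℝ :=
  sInf {c : ℝ | 0 < c ∧ ∫ x, chi (|f x| / c) ∂μ ≤ 1}

namespace LuxAux

lemma chi_nonneg {s : ℝ} (hs : 0 ≤ s) : 0 ≤ chi s := by
  have h1 : Real.log (1 / (s + 1)) ≤ 1 / (s + 1) - 1 :=
    Real.log_le_sub_one_of_pos (by positivity)
  rw [Real.log_div one_ne_zero (by positivity), Real.log_one] at h1
  have h2 : s / (s + 1) ≤ Real.log (s + 1) := by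
    have : 1 - 1 / (s + 1) ≤ Real.log (s + 1) := by linarith
    have hne : s + 1 ≠ 0 := by positivity
    field_simp at this ⊢
    linarith [this]
  have h3 : s = (s + 1) * (s / (s + 1)) := by field_simp
  unfold chi
  nlinarith [mul_le_mul_of_nonneg_left h2 (by positivity : (0:ℝ) ≤ s + 1)]

lemma chi_div_le {s c : ℝ} (hs : 0 ≤ s) (hc : 1 ≤ c) : chi (s / c) ≤ chi s / c := by
  have hc0 : 0 < c := lt_of_lt_of_le one_pos hc
  have ha : (0:ℝ) ≤ 1/c := by positivity
  have ha1 : 1/c ≤ 1 := by rw [div_le_one hc0]; exact hc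
  have key := Real.convexOn_mul_log.2 (Set.mem_Ici.2 (by linarith : (0:ℝ) ≤ s + 1))
    (Set.mem_Ici.2 (by norm_num : (0:ℝ) ≤ 1)) ha (by linarith : (0:ℝ) ≤ 1 - 1/c)
    (by ring : 1/c + (1 - 1/c) = 1)
  simp only [smul_eq_mul, mul_one, Real.log_one] at key
  have heq : (1/c) * (s+1) + (1 - 1/c) = s/c + 1 := by field_simp; ring
  rw [heq] at key
  unfold chi
  have : (s/c + 1) * Real.log (s/c + 1) ≤ (1/c) * ((s+1) * Real.log (s+1)) := by
    calc (s/c+1) * Real.log (s/c+1) ≤ 1/c * ((s+1)*Real.log (s+1)) + (1-1/c)*(1*0) := key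
      _ = 1/c * ((s+1)*Real.log (s+1)) := by ring
  have h4 : (1/c) * ((s+1)*Real.log (s+1)) = (s+1)*Real.log (s+1)/c := by ring
  rw [sub_div]
  linarith

noncomputable def g (s : ℝ) : ℝ := (s+1) * Real.log (s+1) - s * Real.log s - s

lemma hE : (0:ℝ) < Real.exp 1 - 1 := by
  have := Real.exp_one_gt_d9; linarith

lemma g_deriv {x : ℝ} (hx : 0 < x) :
    HasDerivAt g (Real.log (x+1) - Real.log x - 1) x := by
  have h1 : HasDerivAt (fun s : ℝ => (s+1) * Real.log (s+1)) (Real.log (x+1) + 1) x := by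
    have hx1 : x + 1 ≠ 0 := by positivity
    have := ((hasDerivAt_id x).add_const 1).mul ((Real.hasDerivAt_log hx1).comp x
      ((hasDerivAt_id x).add_const 1))
    exact this.congr_deriv (by simp only [Function.comp, id]; field_simp)
  have h2 : HasDerivAt (fun s : ℝ => s * Real.log s) (Real.log x + 1) x := by
    have := (hasDerivAt_id x).mul (Real.hasDerivAt_log hx.ne')
    exact this.congr_deriv (by simp only [id]; field_simp)
  have h3 := (h1.sub h2).sub (hasDerivAt_id x)
  exact h3.congr_deriv (by ring)

lemma g_max {s : ℝ} (hs : 0 < s) : g s ≤ g ((Real.exp 1 - 1)⁻¹) := by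
  set s₀ : ℝ := (Real.exp 1 - 1)⁻¹ with hs₀
  have hs₀pos : 0 < s₀ := inv_pos.2 hE
  have hpos : ∀ x ∈ Set.Ioo (0:ℝ) s₀, 0 < Real.log (x+1) - Real.log x - 1 := by
    rintro x ⟨hx0, hxs⟩
    have h1 : x * Real.exp 1 < x + 1 := by
      have h0 := mul_lt_mul_of_pos_right hxs hE
      rw [hs₀, inv_mul_cancel₀ hE.ne'] at h0
      nlinarith
    have h2 : Real.log (x * Real.exp 1) < Real.log (x+1) :=
      Real.log_lt_log (by positivity) h1
    rw [Real.log_mul hx0.ne' (Real.exp_ne_zero 1), Real.log_exp] at h2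
    linarith
  have hneg : ∀ x ∈ Set.Ioi s₀, Real.log (x+1) - Real.log x - 1 < 0 := by
    intro x hx
    have hx0 : 0 < x := lt_trans hs₀pos hx
    have h1 : x + 1 < x * Real.exp 1 := by
      have h0 := mul_lt_mul_of_pos_right (Set.mem_Ioi.1 hx) hE
      rw [hs₀, inv_mul_cancel₀ hE.ne'] at h0
      nlinarith
    have h2 : Real.log (x+1) < Real.log (x * Real.exp 1) :=
      Real.log_lt_log (by positivity) h1
    rw [Real.log_mul hx0.ne' (Real.exp_ne_zero 1), Real.log_exp] at h2
    linarith
  rcases lt_trichotomy s s₀ with h | h | h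
  · have mono : StrictMonoOn g (Set.Icc s s₀) := by
      apply strictMonoOn_of_deriv_pos (convex_Icc s s₀)
      · intro x hx
        exact (g_deriv (lt_of_lt_of_le hs hx.1)).continuousAt.continuousWithinAt
      · intro x hx
        rw [interior_Icc] at hx
        rw [(g_deriv (lt_trans hs hx.1)).deriv]
        exact hpos x ⟨lt_trans hs hx.1, hx.2⟩
    exact (mono (Set.left_mem_Icc.2 h.le) (Set.right_mem_Icc.2 h.le) h).le
  · rw [h]
  · have anti : StrictAntiOn g (Set.Icc s₀ s) := by
      apply strictAntiOn_of_deriv_neg (convex_Icc s₀ s)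
      · intro x hx
        exact (g_deriv (lt_of_lt_of_le hs₀pos hx.1)).continuousAt.continuousWithinAt
      · intro x hx
        rw [interior_Icc] at hx
        rw [(g_deriv (lt_trans hs₀pos hx.1)).deriv]
        exact hneg x hx.1
    exact (anti (Set.left_mem_Icc.2 h.le) (Set.right_mem_Icc.2 h.le) h).le

lemma g_value : g ((Real.exp 1 - 1)⁻¹) = 1 - Real.log (Real.exp 1 - 1) := by
  have h0 := hE
  have h1 : (Real.exp 1 - 1)⁻¹ + 1 = Real.exp 1 / (Real.exp 1 - 1) := by field_simp; ring
  unfold g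
  rw [h1, Real.log_div (Real.exp_ne_zero 1) h0.ne', Real.log_exp, Real.log_inv]
  field_simp
  ring

lemma chi_le {s : ℝ} (hs : 0 ≤ s) :
    chi s ≤ s * Real.log s + (1 - Real.log (Real.exp 1 - 1)) := by
  rcases eq_or_lt_of_le hs with h | h
  · have hL : Real.log (Real.exp 1 - 1) < 1 := by
      have := Real.log_lt_log hE (by linarith : Real.exp 1 - 1 < Real.exp 1)
      rwa [Real.log_exp] at this
    simp only [← h, chi]
    norm_num
    linarith
  · have := (g_max h).trans_eq g_value
    unfold g at this
    unfold chi
    linarith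

end LuxAux

theorem luxNorm_le_of_entropy {X : Type*} [MeasurableSpace X] (μ : Measure X)
    [IsFiniteMeasure μ] (f : X → ℝ) (A A' : ℝ)
    (hf_meas : Measurable f) (hf_nonneg : ∀ x, 0 ≤ f x)
    (hint : Integrable (fun x => f x * Real.log (f x)) μ)
    (hA : ∫ x, f x * Real.log (f x) ∂μ ≤ A)
    (hA' : A' = max (A + (μ Set.univ).toReal * (1 - Real.log (Real.exp 1 - 1))) 2) :
    (∫ x, chi (f x / A') ∂μ ≤ 1) ∧ luxNorm μ f ≤ A' := by
  set B : ℝ := 1 - Real.log (Real.exp 1 - 1) with hB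
  have hA'2 : 2 ≤ A' := hA' ▸ le_max_right _ _
  have hA'pos : 0 < A' := by linarith
  have hbound : ∀ x, chi (f x / A') ≤ (f x * Real.log (f x) + B) / A' := by
    intro x
    refine (LuxAux.chi_div_le (hf_nonneg x) (by linarith)).trans ?_
    gcongr
    exact LuxAux.chi_le (hf_nonneg x)
  have hg_nonneg : ∀ x, 0 ≤ chi (f x / A') := fun x =>
    LuxAux.chi_nonneg (div_nonneg (hf_nonneg x) hA'pos.le)
  have hmeas : Measurable (fun x => chi (f x / A')) := by
    have m : Measurable (fun x => f x / A') := hf_meas.div_const A'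
    have m1 : Measurable (fun x => f x / A' + 1) := m.add_const 1
    exact (m1.mul (Real.measurable_log.comp m1)).sub m
  have hh_int : Integrable (fun x => (f x * Real.log (f x) + B) / A') μ :=
    (hint.add (integrable_const B)).div_const A'
  have hg_int : Integrable (fun x => chi (f x / A')) μ := by
    refine hh_int.mono hmeas.aestronglyMeasurable (ae_of_all _ fun x => ?_)
    rw [Real.norm_eq_abs, Real.norm_eq_abs, abs_of_nonneg (hg_nonneg x)]
    exact (hbound x).trans (le_abs_self _)
  have hint1 : ∫ x, chi (f x / A') ∂μ ≤ ∫ x, (f x * Real.log (f x) + B) / A' ∂μ :=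
    integral_mono hg_int hh_int hbound
  have hcomp : ∫ x, (f x * Real.log (f x) + B) / A' ∂μ
      = ((∫ x, f x * Real.log (f x) ∂μ) + B * (μ Set.univ).toReal) / A' := by
    rw [integral_div, integral_add hint (integrable_const B), integral_const, smul_eq_mul, measureReal_def]
    ring
  have key : ∫ x, chi (f x / A') ∂μ ≤ 1 := by
    refine hint1.trans ?_
    rw [hcomp, div_le_one hA'pos]
    have h1 : A + (μ Set.univ).toReal * B ≤ A' := hA' ▸ le_max_left _ _
    linarith
  refine ⟨key, ?_⟩
  apply csInf_le ⟨0, fun c hc => hc.1.le⟩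
  refine ⟨hA'pos, ?_⟩
  have heq : (fun x => chi (|f x| / A')) = fun x => chi (f x / A') :=
    funext fun x => by rw [abs_of_nonneg (hf_nonneg x)]
  rw [heq]
  exact key
end
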